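/- If the initial value Q is a symmetric positive definite matrix, then E(t) is nonsingular for every t ∈ [0,T]. -/

import Mathlib

open Matrix Set intervalIntegral Finset Equiv
open scoped Matrix

noncomputable section

variable {n : ℕ}

lemma sum_det_identity (N N' : Matrix (Fin n) (Fin n) ℝ) :
    ∑ σ : Equiv.Perm (Fin n), (Equiv.Perm.sign σ : ℤ) •
      ∑ i, (∏ j ∈ Finset.univ.erase i, N (σ j) j) * N' (σ i) i
    = Matrix.trace (Matrix.adjugate N * N') := by
  have tr : Matrix.trace (Matrix.adjugate N * N')
      = ∑ i, Matrix.det (N.updateCol i (fun k => N' k i)) := by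
    rw [Matrix.trace]
    congr 1; ext i
    have : Matrix.diag (Matrix.adjugate N * N') i
        = (Matrix.adjugate N *ᵥ (fun k => N' k i)) i := by
      simp [Matrix.diag, Matrix.mul_apply, Matrix.mulVec, dotProduct]
    rw [this, ← Matrix.cramer_eq_adjugate_mulVec, Matrix.cramer_apply]
  rw [tr]
  have upd : ∀ i, Matrix.det (N.updateCol i (fun k => N' k i))
      = ∑ σ : Equiv.Perm (Fin n), (Equiv.Perm.sign σ : ℤ) •
          (N' (σ i) i * ∏ j ∈ Finset.univ.erase i, N (σ j) j) := by
    intro i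
    rw [Matrix.det_apply]
    congr 1; ext σ
    congr 1
    rw [← Finset.mul_prod_erase Finset.univ _ (Finset.mem_univ i)]
    rw [Matrix.updateCol_self]
    congr 1
    apply Finset.prod_congr rfl
    intro j hj
    rw [Matrix.updateCol_ne (Finset.ne_of_mem_erase hj)]
  simp only [upd]
  rw [Finset.sum_comm]
  congr 1; ext σ
  rw [Finset.smul_sum]
  congr 1; ext i
  ring_nf


lemma det_hasDerivAt (M : ℝ → Matrix (Fin n) (Fin n) ℝ)
    (M' : Matrix (Fin n) (Fin n) ℝ) (t : ℝ)
    (h : ∀ i j, HasDerivAt (fun s => M s i j) (M' i j) t) :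
    HasDerivAt (fun s => (M s).det) (Matrix.trace (Matrix.adjugate (M t) * M')) t := by
  have key : ∀ σ : Equiv.Perm (Fin n),
      HasDerivAt (fun s => ∏ i, M s (σ i) i)
        (∑ i, (∏ j ∈ Finset.univ.erase i, M t (σ j) j) * M' (σ i) i) t := by
    intro σ
    simpa [smul_eq_mul, mul_comm] using
      HasDerivAt.fun_finsetProd (u := Finset.univ) (f := fun i s => M s (σ i) i)
        (f' := fun i => M' (σ i) i) (fun i _ => h (σ i) i)
  have h2 : HasDerivAt (fun s => ∑ σ : Equiv.Perm (Fin n),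
      (Equiv.Perm.sign σ : ℤ) • ∏ i, M s (σ i) i)
      (∑ σ : Equiv.Perm (Fin n), (Equiv.Perm.sign σ : ℤ) •
        ∑ i, (∏ j ∈ Finset.univ.erase i, M t (σ j) j) * M' (σ i) i) t :=
    HasDerivAt.fun_sum (fun σ _ => (key σ).fun_const_smul _)
  rw [sum_det_identity] at h2
  convert h2 using 2 with s
  rw [Matrix.det_apply]
  simp [Units.smul_def, zsmul_eq_mul]

lemma entry_abs_le {m : ℕ} (g : Fin m → Fin m → ℝ) (i j : Fin m) : |g i j| ≤ ‖g‖ := by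
  have h1 : ‖g i j‖ ≤ ‖g i‖ := norm_le_pi_norm (g i) j
  have h2 : ‖g i‖ ≤ ‖g‖ := norm_le_pi_norm g i
  exact le_trans h1 h2

lemma symmetry_step
    (d d' : ℕ) (T : ℝ) (hT : 0 < T) (lam : ℝ) (hlam : 0 < lam)
    (C : Matrix (Fin d') (Fin d) ℝ)
    (A : ℝ → Matrix (Fin d) (Fin d) ℝ)
    (hA : ∀ i j, ContinuousOn (fun t => A t i j) (Icc 0 T))
    (Q : Matrix (Fin d) (Fin d) ℝ) (hQ : Q.PosDef)
    (E : ℝ → Matrix (Fin d) (Fin d) ℝ)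
    (hE0 : E 0 = Q)
    (hE : ∀ t ∈ Icc (0:ℝ) T, ∀ i j,
      HasDerivAt (fun s => E s i j)
        ((Cᵀ * C - (A t)ᵀ * E t - E t * A t - (1 / lam) • (E t * E t)) i j) t) :
    ∀ t ∈ Icc (0:ℝ) T, ∀ i j, E t i j = E t j i := by
  set R : ℝ → Matrix (Fin d) (Fin d) ℝ :=
    fun t => Cᵀ * C - (A t)ᵀ * E t - E t * A t - (1 / lam) • (E t * E t) with hR
  set f : ℝ → (Fin d → Fin d → ℝ) := fun t i j => E t i j - E t j i with hf
  set f' : ℝ → (Fin d → Fin d → ℝ) := fun t i j => R t i j - R t j i with hf'def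
  have hEc : ∀ i j, ContinuousOn (fun t => E t i j) (Icc 0 T) := by
    intro i j t ht
    exact (hE t ht i j).continuousAt.continuousWithinAt
  have hcA : ContinuousOn (fun t => (fun i j => A t i j : Fin d → Fin d → ℝ)) (Icc 0 T) :=
    continuousOn_pi.2 fun i => continuousOn_pi.2 fun j => hA i j
  have hcE : ContinuousOn (fun t => (fun i j => E t i j : Fin d → Fin d → ℝ)) (Icc 0 T) :=
    continuousOn_pi.2 fun i => continuousOn_pi.2 fun j => hEc i j
  obtain ⟨MA0, hMA0⟩ := isCompact_Icc.exists_bound_of_continuousOn hcA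
  obtain ⟨ME0, hME0⟩ := isCompact_Icc.exists_bound_of_continuousOn hcE
  set MA := max MA0 0 with hMAdef
  set ME := max ME0 0 with hMEdef
  have hMAnn : (0:ℝ) ≤ MA := le_max_right _ _
  have hMEnn : (0:ℝ) ≤ ME := le_max_right _ _
  have hMA : ∀ t ∈ Icc (0:ℝ) T, ∀ i j, |A t i j| ≤ MA := by
    intro t ht i j
    exact le_trans (le_trans (entry_abs_le _ i j) (hMA0 t ht)) (le_max_left _ _)
  have hME : ∀ t ∈ Icc (0:ℝ) T, ∀ i j, |E t i j| ≤ ME := by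
    intro t ht i j
    exact le_trans (le_trans (entry_abs_le _ i j) (hME0 t ht)) (le_max_left _ _)
  set K : ℝ := d * (2 * MA + 2 * ME / lam) with hK
  have hKnn : 0 ≤ K := by
    apply mul_nonneg (Nat.cast_nonneg d)
    have h1 : 0 ≤ 2 * ME / lam := div_nonneg (by linarith) hlam.le
    linarith
  have hfD : ∀ t ∈ Icc (0:ℝ) T, HasDerivAt f (f' t) t := by
    intro t ht
    apply hasDerivAt_pi.2; intro i
    apply hasDerivAt_pi.2; intro j
    exact (hE t ht i j).sub (hE t ht j i)
  have hCC : ∀ i j : Fin d, (Cᵀ * C) i j = (Cᵀ * C) j i := by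
    intro i j
    simp only [Matrix.mul_apply, Matrix.transpose_apply]
    exact Finset.sum_congr rfl fun k _ => mul_comm _ _
  have expand : ∀ t, ∀ i j : Fin d, R t i j = (Cᵀ*C) i j
      - ∑ k, (A t k i * E t k j + E t i k * A t k j + (1/lam)*(E t i k * E t k j)) := by
    intro t i j
    simp only [hR, Matrix.sub_apply, Matrix.smul_apply, smul_eq_mul, Matrix.mul_apply,
      Matrix.transpose_apply]
    rw [Finset.sum_add_distrib, Finset.sum_add_distrib, ← Finset.mul_sum]
    ring
  have hf'entry : ∀ t, ∀ i j, f' t i j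
      = ∑ k, (-(A t k i * f t k j) - A t k j * f t i k
          - (1/lam)*(f t i k * E t k j + E t k i * f t k j)) := by
    intro t i j
    show R t i j - R t j i = _
    rw [expand, expand, hCC i j, sub_sub_sub_cancel_left, ← Finset.sum_sub_distrib]
    apply Finset.sum_congr rfl
    intro k _
    simp only [hf]
    ring
  have hbound : ∀ t ∈ Ico (0:ℝ) T, ‖f' t‖ ≤ K * ‖f t‖ + 0 := by
    intro t ht
    have ht' : t ∈ Icc (0:ℝ) T := Ico_subset_Icc_self ht
    rw [add_zero]
    have hfnn : 0 ≤ K * ‖f t‖ := mul_nonneg hKnn (norm_nonneg _)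
    rw [pi_norm_le_iff_of_nonneg hfnn]
    intro i
    rw [pi_norm_le_iff_of_nonneg hfnn]
    intro j
    have hDent : ∀ a b, |f t a b| ≤ ‖f t‖ := fun a b => entry_abs_le (f t) a b
    rw [Real.norm_eq_abs, hf'entry]
    have hterm : ∀ k : Fin d, |(-(A t k i * f t k j) - A t k j * f t i k
          - (1/lam)*(f t i k * E t k j + E t k i * f t k j))|
        ≤ MA * ‖f t‖ + MA * ‖f t‖ + (1/lam) * (ME * ‖f t‖ + ME * ‖f t‖) := by
      intro k
      have h1 : |A t k i * f t k j| ≤ MA * ‖f t‖ := by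
        rw [abs_mul]
        exact mul_le_mul (hMA t ht' k i) (hDent k j) (abs_nonneg _) hMAnn
      have h2 : |A t k j * f t i k| ≤ MA * ‖f t‖ := by
        rw [abs_mul]
        exact mul_le_mul (hMA t ht' k j) (hDent i k) (abs_nonneg _) hMAnn
      have h3 : |f t i k * E t k j| ≤ ‖f t‖ * ME := by
        rw [abs_mul]
        exact mul_le_mul (hDent i k) (hME t ht' k j) (abs_nonneg _) (norm_nonneg _)
      have h4 : |E t k i * f t k j| ≤ ME * ‖f t‖ := by
        rw [abs_mul]
        exact mul_le_mul (hME t ht' k i) (hDent k j) (abs_nonneg _) hMEnn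
      have h5 : |(1/lam)*(f t i k * E t k j + E t k i * f t k j)|
          ≤ (1/lam) * (ME * ‖f t‖ + ME * ‖f t‖) := by
        rw [abs_mul, abs_of_pos (by positivity : (0:ℝ) < 1/lam)]
        apply mul_le_mul_of_nonneg_left _ (by positivity)
        calc |f t i k * E t k j + E t k i * f t k j|
            ≤ |f t i k * E t k j| + |E t k i * f t k j| := abs_add_le _ _
          _ ≤ ‖f t‖ * ME + ME * ‖f t‖ := add_le_add h3 h4
          _ = ME * ‖f t‖ + ME * ‖f t‖ := by ring
      calc |(-(A t k i * f t k j) - A t k j * f t i k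
          - (1/lam)*(f t i k * E t k j + E t k i * f t k j))|
          ≤ |(-(A t k i * f t k j) - A t k j * f t i k)|
            + |(1/lam)*(f t i k * E t k j + E t k i * f t k j)| := abs_sub _ _
        _ ≤ (|A t k i * f t k j| + |A t k j * f t i k|)
            + (1/lam) * (ME * ‖f t‖ + ME * ‖f t‖) := by
            apply add_le_add _ h5
            calc |(-(A t k i * f t k j) - A t k j * f t i k)|
                ≤ |(-(A t k i * f t k j))| + |A t k j * f t i k| := abs_sub _ _
              _ = |A t k i * f t k j| + |A t k j * f t i k| := by rw [abs_neg]
        _ ≤ MA * ‖f t‖ + MA * ‖f t‖ + (1/lam) * (ME * ‖f t‖ + ME * ‖f t‖) :=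
            add_le_add (add_le_add h1 h2) le_rfl
    calc |∑ k, (-(A t k i * f t k j) - A t k j * f t i k
          - (1/lam)*(f t i k * E t k j + E t k i * f t k j))|
        ≤ ∑ k, |(-(A t k i * f t k j) - A t k j * f t i k
          - (1/lam)*(f t i k * E t k j + E t k i * f t k j))| := Finset.abs_sum_le_sum_abs _ _
      _ ≤ ∑ _k : Fin d, (MA * ‖f t‖ + MA * ‖f t‖ + (1/lam) * (ME * ‖f t‖ + ME * ‖f t‖)) :=
          Finset.sum_le_sum fun k _ => hterm k
      _ = K * ‖f t‖ := by
          rw [Finset.sum_const, Finset.card_univ, Fintype.card_fin, nsmul_eq_mul, hK]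
          field_simp
          ring
  have h0 : ‖f 0‖ ≤ 0 := by
    have : f 0 = 0 := by
      funext i j
      simp only [hf, hE0]
      have := hQ.1
      rw [← Matrix.IsHermitian.apply hQ.1 i j]
      simp [Matrix.conjTranspose_apply]
    rw [this, norm_zero]
  have hgron := norm_le_gronwallBound_of_norm_deriv_right_le
    (f := f) (f' := f') (δ := 0) (K := K) (ε := 0) (a := 0) (b := T)
    (fun t ht => (hfD t ht).continuousAt.continuousWithinAt)
    (fun t ht => (hfD t (Ico_subset_Icc_self ht)).hasDerivWithinAt)
    h0 hbound
  intro t ht i j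
  have h1 := hgron t ht
  rw [sub_zero, gronwallBound_ε0_δ0] at h1
  have h2 : f t = 0 := norm_le_zero_iff.1 h1
  have h3 : f t i j = 0 := by rw [h2]; rfl
  simpa [hf, sub_eq_zero] using h3

lemma psd_trace_nonneg {m : ℕ} {M : Matrix (Fin m) (Fin m) ℝ} (h : M.PosSemidef) :
    0 ≤ M.trace := by
  rw [Matrix.trace]
  apply Finset.sum_nonneg
  intro i _
  have h2 := h.dotProduct_mulVec_nonneg (Pi.single i 1)
  simpa [dotProduct, Matrix.mulVec, Pi.single_apply, Finset.sum_ite_eq,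
    Matrix.diag] using h2

lemma posDef_of_posSemidef_det_ne_zero {m : ℕ} {M : Matrix (Fin m) (Fin m) ℝ}
    (h : M.PosSemidef) (hdet : M.det ≠ 0) : M.PosDef := by
  refine Matrix.PosDef.of_dotProduct_mulVec_pos h.1 (fun x hx => ?_)
  rcases (h.dotProduct_mulVec_nonneg x).lt_or_eq with h3 | h3
  · exact h3
  · exfalso
    apply hx
    have h4 : M *ᵥ x = 0 := (h.dotProduct_mulVec_zero_iff x).1 h3.symm
    have h5 : M⁻¹ *ᵥ (M *ᵥ x) = x := by
      rw [Matrix.mulVec_mulVec, Matrix.nonsing_inv_mul M (isUnit_iff_ne_zero.2 hdet), Matrix.one_mulVec]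
    rw [h4, Matrix.mulVec_zero] at h5
    exact h5.symm

-- adjugate of PD matrix equals det • inverse
lemma adjugate_eq_det_smul_inv {m : ℕ} {M : Matrix (Fin m) (Fin m) ℝ}
    (hdet : M.det ≠ 0) : Matrix.adjugate M = M.det • M⁻¹ := by
  rw [Matrix.inv_def, smul_smul, Ring.mul_inverse_cancel _ (isUnit_iff_ne_zero.2 hdet), one_smul]

lemma trace_adj_CC_nonneg {m m' : ℕ} {M : Matrix (Fin m) (Fin m) ℝ}
    (hM : M.PosDef) (C : Matrix (Fin m') (Fin m) ℝ) :
    0 ≤ Matrix.trace (Matrix.adjugate M * (Cᵀ * C)) := by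
  rw [adjugate_eq_det_smul_inv hM.det_pos.ne', Matrix.smul_mul, Matrix.trace_smul,
    smul_eq_mul]
  apply mul_nonneg hM.det_pos.le
  have h1 : Matrix.trace (M⁻¹ * (Cᵀ * C)) = Matrix.trace (C * M⁻¹ * Cᵀ) := by
    rw [← Matrix.mul_assoc, Matrix.trace_mul_comm, ← Matrix.mul_assoc]
  rw [h1]
  have h2 : (C * M⁻¹ * Cᵀ).PosSemidef := by
    have := hM.inv.posSemidef.mul_mul_conjTranspose_same C
    rwa [Matrix.conjTranspose_eq_transpose_of_trivial] at this
  exact psd_trace_nonneg h2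

lemma trace_adj_R_ge {m m' : ℕ} (M Amat : Matrix (Fin m) (Fin m) ℝ)
    (C : Matrix (Fin m') (Fin m) ℝ) (lam : ℝ) (hM : M.PosDef) :
    -(2 * Matrix.trace Amat + (1/lam) * Matrix.trace M) * M.det
      ≤ Matrix.trace (Matrix.adjugate M * (Cᵀ*C - Amatᵀ*M - M*Amat - (1/lam) • (M*M))) := by
  have hT2 : Matrix.trace (Matrix.adjugate M * (Amatᵀ * M)) = M.det * Matrix.trace Amat := by
    rw [← Matrix.mul_assoc, Matrix.trace_mul_comm, ← Matrix.mul_assoc, Matrix.mul_adjugate,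
      Matrix.smul_mul, Matrix.one_mul, Matrix.trace_smul, smul_eq_mul, Matrix.trace_transpose]
  have hT3 : Matrix.trace (Matrix.adjugate M * (M * Amat)) = M.det * Matrix.trace Amat := by
    rw [← Matrix.mul_assoc, Matrix.adjugate_mul, Matrix.smul_mul, Matrix.one_mul,
      Matrix.trace_smul, smul_eq_mul]
  have hT4 : Matrix.trace (Matrix.adjugate M * (M * M)) = M.det * Matrix.trace M := by
    rw [← Matrix.mul_assoc, Matrix.adjugate_mul, Matrix.smul_mul, Matrix.one_mul,
      Matrix.trace_smul, smul_eq_mul]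
  have hT1 := trace_adj_CC_nonneg hM C
  have expand : Matrix.trace (Matrix.adjugate M * (Cᵀ*C - Amatᵀ*M - M*Amat - (1/lam) • (M*M)))
      = Matrix.trace (Matrix.adjugate M * (Cᵀ*C))
        - Matrix.trace (Matrix.adjugate M * (Amatᵀ * M))
        - Matrix.trace (Matrix.adjugate M * (M * Amat))
        - (1/lam) * Matrix.trace (Matrix.adjugate M * (M * M)) := by
    rw [Matrix.mul_sub, Matrix.mul_sub, Matrix.mul_sub, Matrix.mul_smul, Matrix.trace_sub,
      Matrix.trace_sub, Matrix.trace_sub, Matrix.trace_smul, smul_eq_mul]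
  rw [expand, hT2, hT3, hT4]
  nlinarith [hT1]

lemma entry_abs_le' {m : ℕ} (g : Fin m → Fin m → ℝ) (i j : Fin m) : |g i j| ≤ ‖g‖ := by
  have h1 : ‖g i j‖ ≤ ‖g i‖ := norm_le_pi_norm (g i) j
  have h2 : ‖g i‖ ≤ ‖g‖ := norm_le_pi_norm g i
  exact le_trans h1 h2

lemma quad_form_perturb {m : ℕ} (M : Matrix (Fin m) (Fin m) ℝ) (y : Fin m → ℝ)
    (δ : ℝ) (hδ : 0 ≤ δ) (hM : ∀ i j, |M i j| ≤ δ) (hy : ‖y‖ = 1) :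
    |y ⬝ᵥ (M *ᵥ y)| ≤ m^2 * δ := by
  have hyi : ∀ i, |y i| ≤ 1 := by
    intro i
    have := norm_le_pi_norm y i
    rwa [hy] at this
  have hrow : ∀ i, |(M *ᵥ y) i| ≤ m * δ := by
    intro i
    calc |(M *ᵥ y) i| = |∑ j, M i j * y j| := rfl
      _ ≤ ∑ j, |M i j * y j| := Finset.abs_sum_le_sum_abs _ _
      _ ≤ ∑ _j : Fin m, δ := by
          apply Finset.sum_le_sum
          intro j _
          rw [abs_mul]
          calc |M i j| * |y j| ≤ δ * 1 :=
            mul_le_mul (hM i j) (hyi j) (abs_nonneg _) hδ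
          _ = δ := mul_one δ
      _ = m * δ := by simp [Finset.sum_const, nsmul_eq_mul]
  calc |y ⬝ᵥ (M *ᵥ y)| = |∑ i, y i * (M *ᵥ y) i| := rfl
    _ ≤ ∑ i, |y i * (M *ᵥ y) i| := Finset.abs_sum_le_sum_abs _ _
    _ ≤ ∑ _i : Fin m, m * δ := by
        apply Finset.sum_le_sum
        intro i _
        rw [abs_mul]
        calc |y i| * |(M *ᵥ y) i| ≤ 1 * (m * δ) :=
          mul_le_mul (hyi i) (hrow i) (abs_nonneg _) zero_le_one
        _ = m * δ := one_mul _
    _ = m^2 * δ := by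
        simp [Finset.sum_const, nsmul_eq_mul]
        ring

lemma posdef_nbhd {m : ℕ} (hm : 1 ≤ m) {T : ℝ} {E : ℝ → Matrix (Fin m) (Fin m) ℝ}
    (hsym : ∀ t ∈ Icc (0:ℝ) T, (E t).IsHermitian)
    (hcont : ContinuousOn (fun t => (fun i j => E t i j : Fin m → Fin m → ℝ)) (Icc 0 T))
    {t₀ : ℝ} (ht₀ : t₀ ∈ Icc (0:ℝ) T) (hpd : (E t₀).PosDef) :
    ∃ ε > 0, ∀ t ∈ Icc (0:ℝ) T, |t - t₀| < ε → (E t).PosDef := by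
  haveI : Nonempty (Fin m) := ⟨⟨0, hm⟩⟩
  set Q0 : (Fin m → ℝ) → ℝ := fun x => x ⬝ᵥ ((E t₀) *ᵥ x) with hQ0
  have hQ0c : Continuous Q0 := by
    have hq : Q0 = fun x => ∑ i, x i * ∑ j, E t₀ i j * x j := by
      funext x
      simp [hQ0, dotProduct, Matrix.mulVec]
    rw [hq]
    exact continuous_finset_sum _ fun i _ => (continuous_apply i).mul
      (continuous_finset_sum _ fun j _ => continuous_const.mul (continuous_apply j))
  have hSne : (Metric.sphere (0 : Fin m → ℝ) 1).Nonempty := by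
    refine ⟨(fun _ => 1), ?_⟩
    simp [Metric.mem_sphere, dist_zero_right, pi_norm_const]
  obtain ⟨x₀, hx₀S, hx₀min⟩ :=
    (isCompact_sphere (0 : Fin m → ℝ) 1).exists_isMinOn hSne hQ0c.continuousOn
  have hx₀norm : ‖x₀‖ = 1 := by
    simpa [Metric.mem_sphere, dist_zero_right] using hx₀S
  have hx₀ne : x₀ ≠ 0 := by
    intro h
    rw [h, norm_zero] at hx₀norm
    norm_num at hx₀norm
  set m₀ := Q0 x₀ with hm₀def
  have hm₀pos : 0 < m₀ := by
    have := hpd.dotProduct_mulVec_pos hx₀ne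
    rwa [show star x₀ = x₀ from rfl] at this
  set δ := m₀ / (m^2 + 1) with hδdef
  have hδpos : 0 < δ := by positivity
  obtain ⟨ε, hεpos, hε⟩ :=
    Metric.continuousWithinAt_iff.1 (hcont t₀ ht₀) δ hδpos
  refine ⟨ε, hεpos, fun t ht htε => ?_⟩
  have hnear : ∀ i j, |E t i j - E t₀ i j| ≤ δ := by
    intro i j
    have hd : dist ((fun i j => E t i j) : Fin m → Fin m → ℝ) (fun i j => E t₀ i j) < δ := by
      apply hε ht
      rwa [Real.dist_eq]
    rw [dist_eq_norm] at hd
    exact le_trans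
      (entry_abs_le' ((fun i j => E t i j) - (fun i j => E t₀ i j) : Fin m → Fin m → ℝ) i j)
      hd.le
  -- positivity on unit sphere
  have hkey : ∀ y : Fin m → ℝ, ‖y‖ = 1 → 0 < y ⬝ᵥ (E t *ᵥ y) := by
    intro y hy
    have hsplit : y ⬝ᵥ (E t *ᵥ y) = Q0 y + y ⬝ᵥ ((E t - E t₀) *ᵥ y) := by
      have h1 : E t = E t₀ + (E t - E t₀) := by rw [add_sub_cancel]
      calc y ⬝ᵥ (E t *ᵥ y) = y ⬝ᵥ ((E t₀ + (E t - E t₀)) *ᵥ y) := by rw [← h1]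
        _ = Q0 y + y ⬝ᵥ ((E t - E t₀) *ᵥ y) := by
            rw [Matrix.add_mulVec, dotProduct_add]
    have hmin : m₀ ≤ Q0 y := hx₀min (by simp [Metric.mem_sphere, dist_zero_right, hy])
    have hpert : |y ⬝ᵥ ((E t - E t₀) *ᵥ y)| ≤ m^2 * δ := by
      apply quad_form_perturb _ _ _ hδpos.le _ hy
      intro i j
      exact hnear i j
    have hlt : (m:ℝ)^2 * δ < m₀ := by
      have hpos1 : (0:ℝ) < (m:ℝ)^2 + 1 := by positivity
      calc (m:ℝ)^2 * δ = m₀ * ((m:ℝ)^2/((m:ℝ)^2+1)) := by rw [hδdef]; ring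
        _ < m₀ * 1 := by
            apply mul_lt_mul_of_pos_left _ hm₀pos
            rw [div_lt_one hpos1]
            linarith
        _ = m₀ := mul_one _
    rw [hsplit]
    have := abs_le.1 hpert
    linarith
  -- general vector
  refine Matrix.PosDef.of_dotProduct_mulVec_pos (hsym t ht) (fun x hx => ?_)
  rw [show star x = x from rfl]
  have hc : 0 < ‖x‖ := norm_pos_iff.2 hx
  set y := ‖x‖⁻¹ • x with hydef
  have hyn : ‖y‖ = 1 := by
    rw [hydef, norm_smul, norm_inv, norm_norm, inv_mul_cancel₀ hc.ne']
  have hxy : x = ‖x‖ • y := by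
    rw [hydef, smul_smul, mul_inv_cancel₀ hc.ne', one_smul]
  have he : x ⬝ᵥ (E t *ᵥ x) = ‖x‖ * (‖x‖ * (y ⬝ᵥ (E t *ᵥ y))) := by
    conv_lhs => rw [hxy]
    rw [Matrix.mulVec_smul, smul_dotProduct, dotProduct_smul, smul_eq_mul, smul_eq_mul]
  rw [he]
  exact mul_pos hc (mul_pos hc (hkey y hyn))

/-- if the initial value `Q` of the Riccati equation is symmetric positive
definite, then `E(t)` is nonsingular for every `t ∈ [0,T]`. -/
theorem statement2
    (d d' : ℕ) (hd : 1 ≤ d) (hd' : 1 ≤ d') (T : ℝ) (hT : 0 < T) (lam : ℝ) (hlam : 0 < lam)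
    (C : Matrix (Fin d') (Fin d) ℝ)
    (A : ℝ → Matrix (Fin d) (Fin d) ℝ)
    (hA : ∀ i j, ContinuousOn (fun t => A t i j) (Icc 0 T))
    (Q : Matrix (Fin d) (Fin d) ℝ) (hQ : Q.PosDef)
    (E : ℝ → Matrix (Fin d) (Fin d) ℝ)
    (hE0 : E 0 = Q)
    (hE : ∀ t ∈ Icc (0:ℝ) T, ∀ i j,
      HasDerivAt (fun s => E s i j)
        ((Cᵀ * C - (A t)ᵀ * E t - E t * A t - (1 / lam) • (E t * E t)) i j) t) :
    ∀ t ∈ Icc (0:ℝ) T, (E t).det ≠ 0 := by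
  set R : ℝ → Matrix (Fin d) (Fin d) ℝ :=
    fun t => Cᵀ * C - (A t)ᵀ * E t - E t * A t - (1 / lam) • (E t * E t) with hR
  -- symmetry
  have hsym' : ∀ t ∈ Icc (0:ℝ) T, ∀ i j, E t i j = E t j i :=
    symmetry_step d d' T hT lam hlam C A hA Q hQ E hE0 hE
  have hherm : ∀ t ∈ Icc (0:ℝ) T, (E t).IsHermitian := by
    intro t ht
    apply Matrix.ext
    intro i j
    rw [Matrix.conjTranspose_apply, star_trivial]
    exact hsym' t ht j i
  -- continuity
  have hEc : ∀ i j, ContinuousOn (fun t => E t i j) (Icc 0 T) := by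
    intro i j t ht
    exact (hE t ht i j).continuousAt.continuousWithinAt
  have hcE : ContinuousOn (fun t => (fun i j => E t i j : Fin d → Fin d → ℝ)) (Icc 0 T) :=
    continuousOn_pi.2 fun i => continuousOn_pi.2 fun j => hEc i j
  -- derivative of det
  have hφ' : ∀ t ∈ Icc (0:ℝ) T,
      HasDerivAt (fun s => (E s).det) (Matrix.trace (Matrix.adjugate (E t) * R t)) t := by
    intro t ht
    exact det_hasDerivAt E (R t) t (hE t ht)
  -- bound on the trace coefficient
  set c : ℝ → ℝ := fun t => 2 * Matrix.trace (A t) + (1/lam) * Matrix.trace (E t) with hc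
  have hccont : ContinuousOn c (Icc 0 T) := by
    have h1 : ContinuousOn (fun t => Matrix.trace (A t)) (Icc 0 T) := by
      show ContinuousOn (fun t => ∑ i, A t i i) (Icc 0 T)
      exact continuousOn_finset_sum _ fun i _ => hA i i
    have h2 : ContinuousOn (fun t => Matrix.trace (E t)) (Icc 0 T) := by
      show ContinuousOn (fun t => ∑ i, E t i i) (Icc 0 T)
      exact continuousOn_finset_sum _ fun i _ => hEc i i
    exact (continuousOn_const.mul h1).add (continuousOn_const.mul h2)
  obtain ⟨Kc, hKc⟩ := isCompact_Icc.exists_bound_of_continuousOn hccont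
  have hKc' : ∀ t ∈ Icc (0:ℝ) T, |c t| ≤ Kc := by
    intro t ht
    have := hKc t ht
    rwa [Real.norm_eq_abs] at this
  -- reduce to positive definiteness
  suffices hPD : ∀ t ∈ Icc (0:ℝ) T, (E t).PosDef by
    intro t ht
    exact (hPD t ht).det_pos.ne'
  by_contra hcon
  push_neg at hcon
  obtain ⟨t₁, ht₁, hnot⟩ := hcon
  set S : Set ℝ := {t | t ∈ Icc (0:ℝ) T ∧ ¬ (E t).PosDef} with hSdef
  have hSne : S.Nonempty := ⟨t₁, ht₁, hnot⟩
  have hbdd : BddBelow S := ⟨0, fun s hs => hs.1.1⟩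
  set tstar := sInf S with htstardef
  have htstar_le : tstar ≤ t₁ := csInf_le hbdd ⟨ht₁, hnot⟩
  have htstar_nonneg : 0 ≤ tstar := le_csInf hSne fun s hs => hs.1.1
  have htstar_Icc : tstar ∈ Icc (0:ℝ) T := ⟨htstar_nonneg, le_trans htstar_le ht₁.2⟩
  have hlt : ∀ t ∈ Icc (0:ℝ) T, t < tstar → (E t).PosDef := by
    intro t ht h
    by_contra hn
    exact absurd (csInf_le hbdd ⟨ht, hn⟩) (not_le.2 h)
  have h0pd : (E 0).PosDef := by rw [hE0]; exact hQ
  obtain ⟨ε₀, hε₀, hball0⟩ :=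
    posdef_nbhd hd hherm hcE (⟨le_refl 0, hT.le⟩ : (0:ℝ) ∈ Icc (0:ℝ) T) h0pd
  have htstar_pos : 0 < tstar := by
    apply lt_of_lt_of_le hε₀
    apply le_csInf hSne
    intro s hs
    by_contra hn
    push_neg at hn
    apply hs.2
    apply hball0 s hs.1
    rw [sub_zero, abs_of_nonneg hs.1.1]
    exact hn
  have hnotpd_star : ¬ (E tstar).PosDef := by
    intro hpd
    obtain ⟨ε, hε, hball⟩ := posdef_nbhd hd hherm hcE htstar_Icc hpd
    have hallS : ∀ s ∈ S, tstar + ε ≤ s := by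
      intro s hs
      by_contra hn
      push_neg at hn
      apply hs.2
      apply hball s hs.1
      have h1 : tstar ≤ s := csInf_le hbdd hs
      rw [abs_of_nonneg (by linarith)]
      linarith
    have := le_csInf hSne hallS
    linarith
  -- E tstar is positive semidefinite
  have hpsd : (E tstar).PosSemidef := by
    refine Matrix.PosSemidef.of_dotProduct_mulVec_nonneg (hherm tstar htstar_Icc) (fun x => ?_)
    rw [show star x = x from rfl]
    by_cases hx : x = 0
    · simp [hx]
    · set g : ℝ → ℝ := fun t => x ⬝ᵥ (E t *ᵥ x) with hg
      have hgc : ContinuousOn g (Icc 0 T) := by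
        have hgeq : g = fun t => ∑ i, x i * ∑ j, E t i j * x j := by
          funext t
          simp [hg, dotProduct, Matrix.mulVec]
        rw [hgeq]
        exact continuousOn_finset_sum _ fun i _ => continuousOn_const.mul
          (continuousOn_finset_sum _ fun j _ => (hEc i j).mul continuousOn_const)
      have hcw : ContinuousWithinAt g (Ico 0 tstar) tstar :=
        ((hgc tstar htstar_Icc).mono (fun s hs => ⟨hs.1, le_trans hs.2.le htstar_Icc.2⟩))
      have hne : (Ico (0:ℝ) tstar).Nonempty := ⟨0, le_refl 0, htstar_pos⟩
      have hclos : tstar ∈ closure (Ico (0:ℝ) tstar) := by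
        rw [closure_Ico htstar_pos.ne]
        exact ⟨htstar_nonneg, le_refl _⟩
      have hnebot : (nhdsWithin tstar (Ico (0:ℝ) tstar)).NeBot :=
        mem_closure_iff_nhdsWithin_neBot.1 hclos
      apply ge_of_tendsto hcw
      apply eventually_nhdsWithin_of_forall
      intro s hs
      have hspd : (E s).PosDef :=
        hlt s ⟨hs.1, le_trans hs.2.le htstar_Icc.2⟩ hs.2
      have := hspd.dotProduct_mulVec_pos hx
      rw [show star x = x from rfl] at this
      exact this.le
  -- Gronwall / monotonicity of ψ to get positive determinant at tstar
  set ψ : ℝ → ℝ := fun t => (E t).det * Real.exp (Kc * t) with hψ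
  have hsub : Icc (0:ℝ) tstar ⊆ Icc (0:ℝ) T := fun s hs => ⟨hs.1, le_trans hs.2 htstar_Icc.2⟩
  have hψmono : MonotoneOn ψ (Icc 0 tstar) := by
    apply monotoneOn_of_hasDerivWithinAt_nonneg (convex_Icc 0 tstar)
      (f' := fun x => Matrix.trace (Matrix.adjugate (E x) * R x) * Real.exp (Kc * x)
        + (E x).det * (Real.exp (Kc * x) * Kc))
    · intro s hs
      exact (((hφ' s (hsub hs)).continuousAt).mul
        (Real.continuous_exp.comp (continuous_const.mul continuous_id)).continuousAt).continuousWithinAt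
    · intro x hx
      rw [interior_Icc] at hx
      have hxIcc : x ∈ Icc (0:ℝ) T := hsub ⟨hx.1.le, hx.2.le⟩
      have hexp : HasDerivAt (fun t => Real.exp (Kc * t)) (Real.exp (Kc * x) * Kc) x := by
        have h1 : HasDerivAt (fun t : ℝ => Kc * t) (Kc * 1) x := (hasDerivAt_id x).const_mul Kc
        simpa [Function.comp_def] using (Real.hasDerivAt_exp (Kc * x)).comp x h1
      exact ((hφ' x hxIcc).mul hexp).hasDerivWithinAt
    · intro x hx
      rw [interior_Icc] at hx
      have hxIcc : x ∈ Icc (0:ℝ) T := hsub ⟨hx.1.le, hx.2.le⟩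
      have hxpd : (E x).PosDef := hlt x hxIcc hx.2
      have h1 : -(c x) * (E x).det ≤ Matrix.trace (Matrix.adjugate (E x) * R x) := by
        have := trace_adj_R_ge (E x) (A x) C lam hxpd
        simpa [hR, hc] using this
      have h2 : 0 < (E x).det := hxpd.det_pos
      have h3 : c x ≤ Kc := (abs_le.1 (hKc' x hxIcc)).2
      have h4 : (0:ℝ) < Real.exp (Kc * x) := Real.exp_pos _
      nlinarith [mul_le_mul_of_nonneg_right h1 h4.le,
        mul_nonneg (mul_nonneg h2.le (sub_nonneg.2 h3)) h4.le]
  have hmem0 : (0:ℝ) ∈ Icc (0:ℝ) tstar := ⟨le_refl 0, htstar_nonneg⟩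
  have hmemt : tstar ∈ Icc (0:ℝ) tstar := ⟨htstar_nonneg, le_refl _⟩
  have hψ0 : 0 < ψ 0 := by
    simp only [hψ, mul_zero, Real.exp_zero, mul_one, hE0]
    exact hQ.det_pos
  have hψt : 0 < ψ tstar := lt_of_lt_of_le hψ0 (hψmono hmem0 hmemt htstar_nonneg)
  have hdet_pos : 0 < (E tstar).det := by
    have h4 : (0:ℝ) < Real.exp (Kc * tstar) := Real.exp_pos _
    by_contra hn
    push_neg at hn
    have : ψ tstar ≤ 0 := mul_nonpos_of_nonpos_of_nonneg hn h4.le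
    linarith
  exact hnotpd_star (posDef_of_posSemidef_det_ne_zero hpsd hdet_pos.ne')
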